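/- Let m ≥ 0 be an integer, s = 2m+1, α > 0, and ν a real number. Set b_k = ν − 4k², c_k = 2α(s+2k+1) for k ≥ 0, a_1 = 4α(s−1), and a_k = 2α(s−2k+1) for k ≥ 2. Let K⁰_m be the (m+1)×(m+1) tridiagonal matrix with diagonal entries b_0, …, b_m, superdiagonal c_0, …, c_{m−1} and subdiagonal a_1, …, a_m, and let K¹_m be the m×m tridiagonal matrix with diagonal b_1, …, b_m, superdiagonal c_1, …, c_{m−1} and subdiagonal a_2, …, a_m. Assume det K⁰_m ≠ 0 and det K¹_m ≠ 0. If (A_{2n})_{n≥0} is a real sequence, not identically zero, decaying exponentially, and satisfying ν A_0 + 2α(s+1) A_2 = 0, 4α(s−1) A_0 + (ν−4) A_2 + 2α(s+3) A_4 = 0, and 2α(s−2k+1) A_{2k−2} + (ν−4k²) A_{2k} + 2α(s+2k+1) A_{2k+2} = 0 for all k ≥ 2, then there exists a real sequence (B_{2n})_{n≥1}, not identically zero, decaying exponentially, satisfying (ν−4) B_2 + 2α(s+3) B_4 = 0 and 2α(s−2k+1) B_{2k−2} + (ν−4k²) B_{2k} + 2α(s+2k+1) B_{2k+2} = 0 for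 all k ≥ 2; moreover one may take B_{2n} = A_{2n} for all n > m. -/

import Mathlib

lemma wh_sum_ite_coe {N : ℕ} (t : ℕ) (e : ℝ) :
    ∑ j : Fin N, (if (j : ℕ) = t then e else 0) = if t < N then e else 0 := by
  by_cases h : t < N
  · rw [if_pos h, Finset.sum_eq_single_of_mem ⟨t, h⟩ (Finset.mem_univ _)]
    · simp
    · intro j _ hj
      rw [if_neg (fun hjt => hj (Fin.ext hjt))]
  · rw [if_neg h]
    apply Finset.sum_eq_zero
    intro j _
    rw [if_neg (by have := j.isLt; omega)]

lemma wh_tri_row {N : ℕ} (d u l : ℕ → ℝ) (M : Matrix (Fin N) (Fin N) ℝ)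
    (hM : ∀ i j : Fin N, M i j =
      if (i : ℕ) = (j : ℕ) then d (i : ℕ)
      else if (j : ℕ) = (i : ℕ) + 1 then u (i : ℕ)
      else if (i : ℕ) = (j : ℕ) + 1 then l (i : ℕ)
      else 0)
    (y : ℕ → ℝ) (i : Fin N) :
    M.mulVec (fun j => y (j : ℕ)) i =
      (if 1 ≤ (i : ℕ) then l (i : ℕ) * y ((i : ℕ) - 1) else 0)
      + d (i : ℕ) * y (i : ℕ)
      + (if (i : ℕ) + 1 < N then u (i : ℕ) * y ((i : ℕ) + 1) else 0) := by
  have key : ∀ j : Fin N, M i j * y (j : ℕ) =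
      (if (j : ℕ) = (i : ℕ) then d (i : ℕ) * y (i : ℕ) else 0)
      + (if (j : ℕ) = (i : ℕ) + 1 then u (i : ℕ) * y ((i : ℕ) + 1) else 0)
      + (if 1 ≤ (i : ℕ) then
          (if (j : ℕ) = (i : ℕ) - 1 then l (i : ℕ) * y ((i : ℕ) - 1) else 0) else 0) := by
    intro j
    rw [hM]
    split_ifs <;>
      first
        | omega
        | (rw [show (j:ℕ) = (i:ℕ) from by omega]; ring)
        | (rw [show (j:ℕ) = (i:ℕ) + 1 from by omega]; ring)
        | (rw [show (j:ℕ) = (i:ℕ) - 1 from by omega]; ring)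
        | ring
  rw [show M.mulVec (fun j => y (j : ℕ)) i = ∑ j : Fin N, M i j * y (j : ℕ) from rfl]
  rw [Finset.sum_congr rfl (fun j _ => key j), Finset.sum_add_distrib, Finset.sum_add_distrib,
    wh_sum_ite_coe, wh_sum_ite_coe]
  rw [if_pos i.isLt]
  by_cases hi : 1 ≤ (i : ℕ)
  · simp only [if_pos hi, wh_sum_ite_coe, if_pos (show (i:ℕ) - 1 < N by have := i.isLt; omega)]
    ring
  · simp only [if_neg hi, Finset.sum_const_zero]
    ring

theorem whittaker_hill_coexistence
    (m : ℕ) (α ν s : ℝ) (hα : 0 < α) (hs : s = 2 * (m : ℝ) + 1)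
    (a b c : ℕ → ℝ)
    (hb : ∀ k : ℕ, b k = ν - 4 * (k : ℝ) ^ 2)
    (hc : ∀ k : ℕ, c k = 2 * α * (s + 2 * (k : ℝ) + 1))
    (ha1 : a 1 = 4 * α * (s - 1))
    (ha : ∀ k : ℕ, 2 ≤ k → a k = 2 * α * (s - 2 * (k : ℝ) + 1))
    (K0 : Matrix (Fin (m + 1)) (Fin (m + 1)) ℝ)
    (hK0 : ∀ i j : Fin (m + 1), K0 i j =
      if (i : ℕ) = (j : ℕ) then b (i : ℕ)
      else if (j : ℕ) = (i : ℕ) + 1 then c (i : ℕ)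
      else if (i : ℕ) = (j : ℕ) + 1 then a (i : ℕ)
      else 0)
    (K1 : Matrix (Fin m) (Fin m) ℝ)
    (hK1 : ∀ i j : Fin m, K1 i j =
      if (i : ℕ) = (j : ℕ) then b ((i : ℕ) + 1)
      else if (j : ℕ) = (i : ℕ) + 1 then c ((i : ℕ) + 1)
      else if (i : ℕ) = (j : ℕ) + 1 then a ((i : ℕ) + 1)
      else 0)
    (hdet0 : K0.det ≠ 0) (hdet1 : K1.det ≠ 0)
    (A : ℕ → ℝ)
    (hA_ne : ∃ n : ℕ, A n ≠ 0)
    (hAdecay : ∃ C : ℝ, 0 < C ∧ ∃ r : ℝ, 0 < r ∧ r < 1 ∧ ∀ n : ℕ, |A n| ≤ C * r ^ n)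
    (hA0 : ν * A 0 + 2 * α * (s + 1) * A 1 = 0)
    (hA1 : 4 * α * (s - 1) * A 0 + (ν - 4) * A 1 + 2 * α * (s + 3) * A 2 = 0)
    (hArec : ∀ k : ℕ, 2 ≤ k →
      2 * α * (s - 2 * (k : ℝ) + 1) * A (k - 1) + (ν - 4 * (k : ℝ) ^ 2) * A k
        + 2 * α * (s + 2 * (k : ℝ) + 1) * A (k + 1) = 0) :
    ∃ B : ℕ → ℝ,
      (∃ n : ℕ, 1 ≤ n ∧ B n ≠ 0) ∧
      (∃ C : ℝ, 0 < C ∧ ∃ r : ℝ, 0 < r ∧ r < 1 ∧ ∀ n : ℕ, 1 ≤ n → |B n| ≤ C * r ^ n) ∧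
      ((ν - 4) * B 1 + 2 * α * (s + 3) * B 2 = 0) ∧
      (∀ k : ℕ, 2 ≤ k →
        2 * α * (s - 2 * (k : ℝ) + 1) * B (k - 1) + (ν - 4 * (k : ℝ) ^ 2) * B k
          + 2 * α * (s + 2 * (k : ℝ) + 1) * B (k + 1) = 0) ∧
      (∀ n : ℕ, m < n → B n = A n) := by
  classical
  -- solve the finite K1-system
  have hK1inv : K1 * K1⁻¹ = 1 := Matrix.mul_nonsing_inv K1 (isUnit_iff_ne_zero.mpr hdet1)
  obtain ⟨x, hKx⟩ : ∃ x : Fin m → ℝ, K1.mulVec x =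
      (fun j : Fin m => if (j : ℕ) = m - 1 then -(c m * A (m + 1)) else 0) :=
    ⟨K1⁻¹.mulVec _, by rw [Matrix.mulVec_mulVec, hK1inv, Matrix.one_mulVec]⟩
  set B : ℕ → ℝ := fun n =>
    if h : 1 ≤ n ∧ n ≤ m then x ⟨n - 1, by omega⟩ else if n = 0 then 0 else A n with hBdef
  have hBtail : ∀ n, m < n → B n = A n := by
    intro n hn
    rw [hBdef]
    simp only []
    rw [dif_neg (by omega), if_neg (by omega)]
  have hBx : ∀ (n : ℕ) (h1 : 1 ≤ n) (h2 : n ≤ m), B n = x ⟨n - 1, by omega⟩ := by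
    intro n h1 h2
    rw [hBdef]
    simp only []
    rw [dif_pos ⟨h1, h2⟩]
  have hxy : (fun j : Fin m => B ((j : ℕ) + 1)) = x := by
    funext j
    rw [hBx ((j : ℕ) + 1) (by omega) (by have := j.isLt; omega)]
    exact congrArg x (Fin.ext (by simp))
  have hrow : ∀ i : Fin m,
      (if 1 ≤ (i : ℕ) then a ((i : ℕ) + 1) * B ((i : ℕ) - 1 + 1) else 0)
      + b ((i : ℕ) + 1) * B ((i : ℕ) + 1)
      + (if (i : ℕ) + 1 < m then c ((i : ℕ) + 1) * B ((i : ℕ) + 1 + 1) else 0)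
      = (if (i : ℕ) = m - 1 then -(c m * A (m + 1)) else 0) := by
    intro i
    have h := wh_tri_row (fun n => b (n + 1)) (fun n => c (n + 1)) (fun n => a (n + 1))
      K1 hK1 (fun n => B (n + 1)) i
    have h2 : K1.mulVec (fun j : Fin m => B ((j : ℕ) + 1)) i
        = (if (i : ℕ) = m - 1 then -(c m * A (m + 1)) else 0) := by
      rw [hxy]
      exact congrFun hKx i
    exact h.symm.trans h2
  have hb1 : b 1 = ν - 4 := by rw [hb]; norm_num
  have hc1 : c 1 = 2 * α * (s + 3) := by rw [hc]; push_cast; ring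
  -- equation R1
  have goal1 : (ν - 4) * B 1 + 2 * α * (s + 3) * B 2 = 0 := by
    rcases Nat.eq_zero_or_pos m with hm | hm
    · have hB1 : B 1 = A 1 := hBtail 1 (by omega)
      have hB2 : B 2 = A 2 := hBtail 2 (by omega)
      have hsz : 4 * α * (s - 1) * A 0 = 0 := by
        rw [hs, hm]; norm_num
      rw [hB1, hB2]; linarith [hA1]
    · have h : (if 1 ≤ 0 then a (0 + 1) * B (0 - 1 + 1) else 0)
          + b (0 + 1) * B (0 + 1)
          + (if 0 + 1 < m then c (0 + 1) * B (0 + 1 + 1) else 0)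
          = (if 0 = m - 1 then -(c m * A (m + 1)) else 0) := hrow ⟨0, hm⟩
      rw [if_neg (by omega)] at h
      norm_num at h
      rcases eq_or_lt_of_le (show 1 ≤ m from hm) with hm1 | hm2
      · -- m = 1
        rw [if_neg (by omega), if_pos (by omega)] at h
        have hB2 : B 2 = A 2 := hBtail 2 (by omega)
        rw [← hm1] at h
        rw [hB2, ← hb1, ← hc1]
        linarith [h]
      · -- m ≥ 2
        rw [if_pos (by omega), if_neg (by omega)] at h
        rw [← hb1, ← hc1]
        linarith [h]
  -- equations Rk, k ≥ 2
  have goal2 : ∀ k : ℕ, 2 ≤ k →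
      2 * α * (s - 2 * (k : ℝ) + 1) * B (k - 1) + (ν - 4 * (k : ℝ) ^ 2) * B k
        + 2 * α * (s + 2 * (k : ℝ) + 1) * B (k + 1) = 0 := by
    intro k hk
    rcases lt_trichotomy k (m + 1) with hkm | hkm | hkm
    · -- 2 ≤ k ≤ m
      have hkm' : k ≤ m := by omega
      have h : (if 1 ≤ k - 1 then a (k - 1 + 1) * B (k - 1 - 1 + 1) else 0)
          + b (k - 1 + 1) * B (k - 1 + 1)
          + (if k - 1 + 1 < m then c (k - 1 + 1) * B (k - 1 + 1 + 1) else 0)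
          = (if k - 1 = m - 1 then -(c m * A (m + 1)) else 0) := hrow ⟨k - 1, by omega⟩
      rw [if_pos (show 1 ≤ k - 1 by omega),
        show k - 1 + 1 = k from by omega, show k - 1 - 1 + 1 = k - 1 from by omega] at h
      have hak : a k = 2 * α * (s - 2 * (k : ℝ) + 1) := ha k hk
      have hbk : b k = ν - 4 * (k : ℝ) ^ 2 := hb k
      have hck : c k = 2 * α * (s + 2 * (k : ℝ) + 1) := hc k
      rcases lt_or_eq_of_le hkm' with h2 | h2
      · rw [if_pos h2, if_neg (by omega)] at h
        rw [← hak, ← hbk, ← hck]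
        linarith [h]
      · rw [if_neg (by omega), if_pos (by omega)] at h
        have hB1 : B (k + 1) = A (k + 1) := hBtail _ (by omega)
        rw [← hak, ← hbk, ← hck, hB1]
        rw [h2] at h ⊢
        linarith [h]
    · -- k = m + 1
      have hz : 2 * α * (s - 2 * (k : ℝ) + 1) = 0 := by
        rw [hs, hkm]; push_cast; ring
      have hrec := hArec k hk
      rw [hz, zero_mul] at hrec
      rw [hz, zero_mul]
      rw [hBtail k (by omega), hBtail (k + 1) (by omega)]
      linarith [hrec]
    · -- k ≥ m + 2
      have hrec := hArec k hk
      rw [hBtail (k - 1) (by omega), hBtail k (by omega), hBtail (k + 1) (by omega)]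
      exact hrec
  -- nontriviality: some A n with n > m is nonzero
  have hK0inv : K0⁻¹ * K0 = 1 := Matrix.nonsing_inv_mul K0 (isUnit_iff_ne_zero.mpr hdet0)
  have htail : ∃ n, m < n ∧ A n ≠ 0 := by
    by_contra hcon
    push_neg at hcon
    have hvec : K0.mulVec (fun j : Fin (m + 1) => A (j : ℕ)) = 0 := by
      funext i
      have h := wh_tri_row b c a K0 hK0 A i
      rw [Pi.zero_apply, h]
      have hsup : (if (i : ℕ) + 1 < m + 1 then c (i : ℕ) * A ((i : ℕ) + 1) else 0)
          = c (i : ℕ) * A ((i : ℕ) + 1) := by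
        split_ifs with hh
        · rfl
        · rw [hcon ((i : ℕ) + 1) (by have := i.isLt; omega), mul_zero]
      rw [hsup]
      by_cases ht0 : (i : ℕ) = 0
      · rw [ht0, if_neg (by omega)]
        have e1 : b 0 = ν := by rw [hb]; norm_num
        have e2 : c 0 = 2 * α * (s + 1) := by rw [hc]; norm_num
        rw [e1, e2]
        linarith [hA0]
      · by_cases ht1 : (i : ℕ) = 1
        · rw [ht1, if_pos (by omega)]
          norm_num
          rw [ha1, hb1, hc1]
          linarith [hA1]
        · have ht2 : 2 ≤ (i : ℕ) := by omega
          rw [if_pos (by omega)]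
          rw [ha _ ht2, hb, hc]
          exact hArec (i : ℕ) ht2
    have hzero : (fun j : Fin (m + 1) => A (j : ℕ)) = 0 := by
      have h := congrArg K0⁻¹.mulVec hvec
      rwa [Matrix.mulVec_mulVec, hK0inv, Matrix.one_mulVec, Matrix.mulVec_zero] at h
    obtain ⟨n, hAn⟩ := hA_ne
    rcases Nat.lt_or_ge m n with hn | hn
    · exact hAn (hcon n hn)
    · exact hAn (congrFun hzero ⟨n, by omega⟩)
  -- assemble
  obtain ⟨C, hC, r, hr0, hr1, hCr⟩ := hAdecay
  refine ⟨B, ?_, ?_, goal1, goal2, hBtail⟩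
  · obtain ⟨n, hmn, hAn⟩ := htail
    exact ⟨n, by omega, by rw [hBtail n hmn]; exact hAn⟩
  · refine ⟨C + ∑ k ∈ Finset.range (m + 1), |B k| / r ^ k, ?_, r, hr0, hr1, ?_⟩
    · have hS : 0 ≤ ∑ k ∈ Finset.range (m + 1), |B k| / r ^ k :=
        Finset.sum_nonneg fun k _ => by positivity
      linarith
    · intro n hn
      have hS : 0 ≤ ∑ k ∈ Finset.range (m + 1), |B k| / r ^ k :=
        Finset.sum_nonneg fun k _ => by positivity
      have hrn : (0 : ℝ) < r ^ n := pow_pos hr0 n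
      by_cases hnm : n ≤ m
      · have hle : |B n| / r ^ n ≤ ∑ k ∈ Finset.range (m + 1), |B k| / r ^ k :=
          Finset.single_le_sum (f := fun k => |B k| / r ^ k) (fun k _ => by positivity)
            (Finset.mem_range.mpr (by omega))
        calc |B n| = (|B n| / r ^ n) * r ^ n := by field_simp
          _ ≤ (C + ∑ k ∈ Finset.range (m + 1), |B k| / r ^ k) * r ^ n := by
              apply mul_le_mul_of_nonneg_right _ hrn.le
              linarith
      · rw [hBtail n (by omega)]
        calc |A n| ≤ C * r ^ n := hCr n
          _ ≤ (C + ∑ k ∈ Finset.range (m + 1), |B k| / r ^ k) * r ^ n := by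
              nlinarith [mul_nonneg hS hrn.le]
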